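/- arXiv:2505.18478 — 3 statements merged into one kernel-verified Lean document; each statement's English description precedes it below -/
import Mathlib

section
/- Noise-resilience theorem for smoothed classifiers with independent per-coordinate Gaussian noise: Let f : ℝᵈ → Γ be a measurable classifier into a finite label set Γ, σ ∈ ℝᵈ with σᵢ > 0, Σ = diag(σ²), and ε ~ N(0,Σ). Suppose for a point θ ∈ ℝᵈ and class c_a, ℙ(f(θ+ε) = c_a) ≥ p_A and max_{c ≠ c_a} ℙ(f(θ+ε) = c) ≤ p_B with p_A ≥ p_B, p_A, p_B ∈ (0,1). Then for every δ ∈ ℝᵈ with ‖δ ⊘ σ‖₂ < ½(Φ⁻¹(p_A) - Φ⁻¹(p_B)), we have ℙ(f(θ+δ+ε) = c_a) > ℙ(f(θ+δ+ε) = c) for all c ≠ c_a. -/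
open MeasureTheory ProbabilityTheory

noncomputable def Phi (x : ℝ) : ℝ := ((gaussianReal 0 1) (Set.Iic x)).toReal

noncomputable def PhiInv : ℝ → ℝ := Function.invFun Phi

noncomputable def gaussPi (d : ℕ) (m s : Fin d → ℝ) : Measure (Fin d → ℝ) :=
  Measure.pi fun i => gaussianReal (m i) ((s i ^ 2).toNNReal)

open Filter Topology Real
open scoped NNReal ENNReal

lemma gauss_ne_top (s : Set ℝ) : (gaussianReal 0 1) s ≠ ⊤ := measure_ne_top _ _

lemma gauss_Iic_split {x y : ℝ} (h : x ≤ y) :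
    (gaussianReal 0 1) (Set.Iic y)
      = (gaussianReal 0 1) (Set.Iic x) + (gaussianReal 0 1) (Set.Ioc x y) := by
  rw [← Set.Iic_union_Ioc_eq_Iic h, measure_union _ measurableSet_Ioc]
  exact Set.Iic_disjoint_Ioc le_rfl

lemma gauss_Ioc_pos {x y : ℝ} (h : x < y) : 0 < (gaussianReal 0 1) (Set.Ioc x y) := by
  rcases eq_or_lt_of_le (zero_le : 0 ≤ (gaussianReal 0 1) (Set.Ioc x y)) with h0 | h0
  · exfalso
    have := (gaussianReal_absolutelyContinuous' 0 (v := 1) one_ne_zero) h0.symm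
    rw [Real.volume_Ioc] at this
    simp only [ENNReal.ofReal_eq_zero] at this
    linarith
  · exact h0

lemma gauss_Ioc_le {x y : ℝ} (h : x ≤ y) :
    (gaussianReal 0 1) (Set.Ioc x y) ≤ ENNReal.ofReal (y - x) := by
  rw [gaussianReal_apply 0 one_ne_zero]
  calc ∫⁻ t in Set.Ioc x y, gaussianPDF 0 1 t
      ≤ ∫⁻ _ in Set.Ioc x y, 1 := by
        refine setLIntegral_mono measurable_const fun t _ => ?_
        rw [gaussianPDF]
        refine ENNReal.ofReal_le_one.2 ?_
        rw [gaussianPDFReal]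
        have h1 : (1:ℝ) ≤ Real.sqrt (2 * Real.pi * (1:ℝ≥0)) := by
          rw [Real.le_sqrt' one_pos]
          have := Real.pi_gt_three
          push_cast
          nlinarith
        have h2 : Real.exp (-(t - 0) ^ 2 / (2 * (1:ℝ≥0))) ≤ 1 := by
          rw [Real.exp_le_one_iff]
          push_cast
          nlinarith [sq_nonneg (t - 0)]
        calc (Real.sqrt (2 * Real.pi * (1:ℝ≥0)))⁻¹ * Real.exp (-(t - 0) ^ 2 / (2 * (1:ℝ≥0)))
            ≤ 1 * 1 := by
              apply mul_le_mul _ h2 (Real.exp_nonneg _) zero_le_one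
              exact inv_le_one_of_one_le₀ h1
          _ = 1 := by ring
    _ = ENNReal.ofReal (y - x) := by
        rw [setLIntegral_one, Real.volume_Ioc]

lemma Phi_mono : Monotone Phi := by
  intro x y h
  unfold Phi
  rw [gauss_Iic_split h]
  exact ENNReal.toReal_mono (by simp [gauss_ne_top]) le_self_add

lemma Phi_strictMono : StrictMono Phi := by
  intro x y h
  unfold Phi
  rw [gauss_Iic_split h.le, ENNReal.toReal_add (gauss_ne_top _) (gauss_ne_top _)]
  have := gauss_Ioc_pos h
  have h2 : 0 < ((gaussianReal 0 1) (Set.Ioc x y)).toReal :=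
    ENNReal.toReal_pos this.ne' (gauss_ne_top _)
  linarith

lemma Phi_lipschitz : LipschitzWith 1 Phi := by
  rw [lipschitzWith_iff_dist_le_mul]
  intro x y
  wlog h : y ≤ x generalizing x y
  · rw [dist_comm, dist_comm x y]; exact this _ _ (le_of_not_ge h)
  rw [Real.dist_eq, Real.dist_eq, abs_of_nonneg (sub_nonneg.2 (Phi_mono h)),
    abs_of_nonneg (sub_nonneg.2 h), NNReal.coe_one, one_mul]
  unfold Phi
  rw [gauss_Iic_split h, ENNReal.toReal_add (gauss_ne_top _) (gauss_ne_top _)]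
  have h1 := gauss_Ioc_le h
  have h2 : ((gaussianReal 0 1) (Set.Ioc y x)).toReal ≤ x - y := by
    rw [← ENNReal.ofReal_toReal (gauss_ne_top (Set.Ioc y x))] at h1
    exact (ENNReal.ofReal_le_ofReal_iff (by linarith)).1 h1
  linarith

lemma Phi_continuous : Continuous Phi := Phi_lipschitz.continuous

lemma Phi_tendsto_atTop : Tendsto Phi atTop (𝓝 1) := by
  have h := tendsto_measure_Iic_atTop (gaussianReal 0 1)
  rw [measure_univ] at h
  have := (ENNReal.tendsto_toReal (by norm_num : (1:ℝ≥0∞) ≠ ⊤)).comp h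
  exact this



lemma Phi_neg (x : ℝ) : Phi (-x) = 1 - Phi x := by
  have hmap : (gaussianReal 0 1).map (fun y => (-1 : ℝ) * y) = gaussianReal 0 1 := by
    rw [gaussianReal_map_const_mul]
    congr 1
    · norm_num
    · ext
      push_cast
      norm_num
  have hpre : (fun y => (-1 : ℝ) * y) ⁻¹' (Set.Iic (-x)) = Set.Ici x := by
    ext y
    simp only [Set.mem_preimage, Set.mem_Iic, Set.mem_Ici]
    constructor <;> intro h <;> linarith
  have h1 : (gaussianReal 0 1) (Set.Iic (-x)) = (gaussianReal 0 1) (Set.Ici x) := by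
    conv_lhs => rw [← hmap]
    rw [Measure.map_apply (measurable_const_mul _) measurableSet_Iic, hpre]
  have hsing : (gaussianReal 0 1) {x} = 0 :=
    gaussianReal_absolutelyContinuous 0 one_ne_zero (measure_singleton x)
  have h2 : (gaussianReal 0 1) (Set.Iic x) + (gaussianReal 0 1) (Set.Ici x)
      = 1 + (gaussianReal 0 1) {x} := by
    rw [← measure_univ (μ := gaussianReal 0 1)]
    rw [← measure_union_add_inter (Set.Iic x) measurableSet_Ici]
    congr 1
    · congr 1
      exact Set.Iic_union_Ici
    · congr 1
      exact Set.Iic_inter_Ici.trans (Set.Icc_self x)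
  rw [hsing, add_zero] at h2
  unfold Phi
  rw [h1]
  have h3 := congrArg ENNReal.toReal h2
  rw [ENNReal.toReal_add (gauss_ne_top _) (gauss_ne_top _)] at h3
  simp only [ENNReal.toReal_one] at h3
  linarith


lemma Phi_tendsto_atBot : Tendsto Phi atBot (𝓝 0) := by
  have h : Tendsto (fun x => Phi (-x)) atTop (𝓝 0) := by
    simp only [Phi_neg]
    simpa using (tendsto_const_nhds (x := (1:ℝ))).sub Phi_tendsto_atTop
  have := h.comp tendsto_neg_atBot_atTop
  exact this.congr (fun x => by simp)

lemma Phi_surj {p : ℝ} (hp : p ∈ Set.Ioo (0:ℝ) 1) : ∃ x, Phi x = p := by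
  obtain ⟨a, ha⟩ := (Phi_tendsto_atBot.eventually (eventually_lt_nhds hp.1)).exists
  obtain ⟨b, hb⟩ := (Phi_tendsto_atTop.eventually (eventually_gt_nhds hp.2)).exists
  have hab : a ≤ b := by
    by_contra hc
    exact absurd (Phi_mono (le_of_not_ge hc)) (by linarith)
  obtain ⟨x, _, hx⟩ := intermediate_value_Icc hab Phi_continuous.continuousOn
    (Set.mem_Icc.2 ⟨ha.le, hb.le⟩)
  exact ⟨x, hx⟩

lemma Phi_PhiInv {p : ℝ} (hp : p ∈ Set.Ioo (0:ℝ) 1) : Phi (PhiInv p) = p :=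
  Function.invFun_eq (Phi_surj hp)

lemma gaussianPDFReal_conv_integral (m₁ m₂ : ℝ) (v₁ v₂ : ℝ≥0) (hv₁ : v₁ ≠ 0) (hv₂ : v₂ ≠ 0)
    (y : ℝ) :
    ∫ x, gaussianPDFReal m₁ v₁ x * gaussianPDFReal m₂ v₂ (y - x)
      = gaussianPDFReal (m₁ + m₂) (v₁ + v₂) y := by
  set a : ℝ := (v₁ : ℝ) with ha_def
  set b : ℝ := (v₂ : ℝ) with hb_def
  have ha : 0 < a := by rw [ha_def]; exact NNReal.coe_pos.mpr (zero_lt_iff.mpr hv₁)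
  have hb : 0 < b := by rw [hb_def]; exact NNReal.coe_pos.mpr (zero_lt_iff.mpr hv₂)
  set V : ℝ := a + b with hV_def
  have hV : 0 < V := by positivity
  set α : ℝ := V / (2 * a * b) with hα_def
  have hα : 0 < α := by positivity
  set β : ℝ := (m₁ * b + (y - m₂) * a) / V with hβ_def
  set A : ℝ := (Real.sqrt (2 * π * a))⁻¹ with hA_def
  set B : ℝ := (Real.sqrt (2 * π * b))⁻¹ with hB_def
  set E : ℝ := rexp (-(y - m₁ - m₂) ^ 2 / (2 * V)) with hE_def
  have hpt : ∀ x, gaussianPDFReal m₁ v₁ x * gaussianPDFReal m₂ v₂ (y - x)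
      = (A * B * E) * rexp (-(α * (x - β) ^ 2)) := by
    intro x
    rw [gaussianPDFReal, gaussianPDFReal]
    rw [show (√(2 * π * (v₁:ℝ)))⁻¹ = A from rfl, show (√(2 * π * (v₂:ℝ)))⁻¹ = B from rfl]
    have : rexp (-(x - m₁) ^ 2 / (2 * (v₁:ℝ))) * rexp (-(y - x - m₂) ^ 2 / (2 * (v₂:ℝ)))
        = E * rexp (-(α * (x - β) ^ 2)) := by
      rw [hE_def, ← Real.exp_add, ← Real.exp_add]
      congr 1
      rw [hα_def, hβ_def]
      field_simp
      ring
    calc A * rexp (-(x - m₁) ^ 2 / (2 * (v₁:ℝ))) * (B * rexp (-(y - x - m₂) ^ 2 / (2 * (v₂:ℝ))))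
        = A * B * (rexp (-(x - m₁) ^ 2 / (2 * (v₁:ℝ))) * rexp (-(y - x - m₂) ^ 2 / (2 * (v₂:ℝ)))) := by ring
      _ = A * B * (E * rexp (-(α * (x - β) ^ 2))) := by rw [this]
      _ = (A * B * E) * rexp (-(α * (x - β) ^ 2)) := by ring
  rw [integral_congr_ae (ae_of_all _ hpt)]
  rw [MeasureTheory.integral_const_mul]
  have hshift : ∫ x, rexp (-(α * (x - β) ^ 2)) = √(π / α) := by
    have := MeasureTheory.integral_sub_right_eq_self (fun t => rexp (-(α * t ^ 2))) β (μ := volume)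
    rw [this, ← integral_gaussian α]
    congr 1 with x
    ring_nf
  rw [hshift]
  rw [gaussianPDFReal]
  have hcoe : ((v₁ + v₂ : ℝ≥0) : ℝ) = V := by push_cast; rfl
  rw [hcoe]
  have hconst : A * B * √(π / α) = (√(2 * π * V))⁻¹ := by
    rw [hA_def, hB_def, ← Real.sqrt_inv, ← Real.sqrt_inv, ← Real.sqrt_inv,
      ← Real.sqrt_mul (by positivity), ← Real.sqrt_mul (by positivity)]
    congr 1
    rw [hα_def]
    field_simp
  have hexp : E = rexp (-(y - (m₁ + m₂)) ^ 2 / (2 * V)) := by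
    rw [hE_def]; ring_nf
  calc A * B * E * √(π / α) = (A * B * √(π / α)) * E := by ring
    _ = (√(2 * π * V))⁻¹ * rexp (-(y - (m₁ + m₂)) ^ 2 / (2 * V)) := by rw [hconst, hexp]

lemma integrable_conv_aux (m₁ m₂ : ℝ) (v₁ v₂ : ℝ≥0) (hv₁ : v₁ ≠ 0) (hv₂ : v₂ ≠ 0) (y : ℝ) :
    Integrable (fun x => gaussianPDFReal m₁ v₁ x * gaussianPDFReal m₂ v₂ (y - x)) := by
  have hb : (0:ℝ) < (v₂ : ℝ) := NNReal.coe_pos.mpr (zero_lt_iff.mpr hv₂)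
  have hbd : ∀ x, ‖gaussianPDFReal m₂ v₂ (y - x)‖ ≤ (Real.sqrt (2 * π * (v₂:ℝ)))⁻¹ := by
    intro x
    rw [Real.norm_eq_abs, abs_of_nonneg (gaussianPDFReal_nonneg _ _ _), gaussianPDFReal]
    have h2 : rexp (-(y - x - m₂) ^ 2 / (2 * (v₂:ℝ))) ≤ 1 := by
      rw [Real.exp_le_one_iff, neg_div, neg_nonpos]
      positivity
    calc (√(2 * π * (v₂:ℝ)))⁻¹ * rexp (-(y - x - m₂) ^ 2 / (2 * (v₂:ℝ)))
        ≤ (√(2 * π * (v₂:ℝ)))⁻¹ * 1 :=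
          mul_le_mul_of_nonneg_left h2 (by positivity)
      _ = (√(2 * π * (v₂:ℝ)))⁻¹ := mul_one _
  have := (integrable_gaussianPDFReal m₁ v₁).bdd_mul
    (((measurable_gaussianPDFReal m₂ v₂).comp (measurable_const.sub measurable_id)).aestronglyMeasurable)
    (ae_of_all _ hbd)
  simpa [Function.comp, mul_comm] using this

lemma lintegral_gaussianPDF_conv (m₁ m₂ : ℝ) (v₁ v₂ : ℝ≥0) (hv₁ : v₁ ≠ 0) (hv₂ : v₂ ≠ 0)
    (y : ℝ) :
    ∫⁻ x, gaussianPDF m₁ v₁ x * gaussianPDF m₂ v₂ (y - x)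
      = gaussianPDF (m₁ + m₂) (v₁ + v₂) y := by
  simp_rw [gaussianPDF, ← ENNReal.ofReal_mul (gaussianPDFReal_nonneg m₁ v₁ _)]
  rw [← ofReal_integral_eq_lintegral_ofReal (integrable_conv_aux m₁ m₂ v₁ v₂ hv₁ hv₂ y)
    (ae_of_all _ fun x => mul_nonneg (gaussianPDFReal_nonneg _ _ _) (gaussianPDFReal_nonneg _ _ _))]
  rw [gaussianPDFReal_conv_integral m₁ m₂ v₁ v₂ hv₁ hv₂ y]

lemma gaussianReal_conv (m₁ m₂ : ℝ) (v₁ v₂ : ℝ≥0) :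
    ((gaussianReal m₁ v₁).prod (gaussianReal m₂ v₂)).map (fun p : ℝ × ℝ => p.1 + p.2)
      = gaussianReal (m₁ + m₂) (v₁ + v₂) := by
  by_cases hv₁ : v₁ = 0
  · subst hv₁
    rw [gaussianReal_zero_var, Measure.dirac_prod, Measure.map_map (by fun_prop) (by fun_prop)]
    have : ((fun p : ℝ × ℝ => p.1 + p.2) ∘ (Prod.mk m₁)) = (fun y => m₁ + y) := rfl
    rw [this, gaussianReal_map_const_add, zero_add, add_comm m₂ m₁]
  by_cases hv₂ : v₂ = 0
  · subst hv₂
    rw [gaussianReal_zero_var, Measure.prod_dirac, Measure.map_map (by fun_prop) (by fun_prop)]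
    have : ((fun p : ℝ × ℝ => p.1 + p.2) ∘ (fun x => (x, m₂))) = (fun x => x + m₂) := rfl
    rw [this, gaussianReal_map_add_const, add_zero]
  have hV : v₁ + v₂ ≠ 0 := by
    intro h
    exact hv₁ (add_eq_zero.mp h).1
  ext s hs
  rw [Measure.map_apply (by fun_prop) hs, gaussianReal_apply _ hV,
    Measure.prod_apply (hs.preimage (by fun_prop))]
  have h1 : ∀ x : ℝ, (gaussianReal m₂ v₂) (Prod.mk x ⁻¹' ((fun p : ℝ × ℝ => p.1 + p.2) ⁻¹' s))
      = ∫⁻ y in s, gaussianPDF m₂ v₂ (y - x) := by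
    intro x
    have hpre : Prod.mk x ⁻¹' ((fun p : ℝ × ℝ => p.1 + p.2) ⁻¹' s) = (fun y => x + y) ⁻¹' s := rfl
    rw [hpre, ← Measure.map_apply (by fun_prop) hs, gaussianReal_map_const_add,
      gaussianReal_apply _ hv₂]
    congr 1
    ext y
    rw [gaussianPDF, gaussianPDF, gaussianPDFReal_sub]
  simp_rw [h1]
  have hmeasF : Measurable (Function.uncurry fun x y => gaussianPDF m₂ v₂ (y - x)) := by
    apply Measurable.ennreal_ofReal
    exact (measurable_gaussianPDFReal m₂ v₂).comp (measurable_snd.sub measurable_fst)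
  have hmeasg : Measurable fun x => ∫⁻ y in s, gaussianPDF m₂ v₂ (y - x) :=
    Measurable.lintegral_prod_right' hmeasF
  rw [gaussianReal_of_var_ne_zero _ hv₁,
    lintegral_withDensity_eq_lintegral_mul _ (measurable_gaussianPDF m₁ v₁) hmeasg]
  simp only [Pi.mul_apply]
  have h2 : ∀ x, gaussianPDF m₁ v₁ x * ∫⁻ y in s, gaussianPDF m₂ v₂ (y - x)
      = ∫⁻ y in s, gaussianPDF m₁ v₁ x * gaussianPDF m₂ v₂ (y - x) := fun x =>
    (lintegral_const_mul _ ((measurable_gaussianPDF m₂ v₂).comp (measurable_id.sub_const x))).symm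
  simp_rw [h2]
  rw [lintegral_lintegral_swap]
  · refine setLIntegral_congr_fun hs (fun y _ => ?_)
    exact lintegral_gaussianPDF_conv m₁ m₂ v₁ v₂ hv₁ hv₂ y
  · apply Measurable.aemeasurable
    exact ((measurable_gaussianPDF m₁ v₁).comp measurable_fst).mul
      ((measurable_gaussianPDF m₂ v₂).comp (measurable_snd.sub measurable_fst))

lemma sq_mk_toNNReal (c : ℝ) : (⟨c^2, sq_nonneg c⟩ : ℝ≥0) = (c^2).toNNReal := by
  ext
  simp [Real.coe_toNNReal _ (sq_nonneg c)]

lemma gaussPi_map_sum : ∀ (n : ℕ) (a m : Fin n → ℝ) (v : Fin n → ℝ≥0),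
    (Measure.pi fun i => gaussianReal (m i) (v i)).map (fun x => ∑ i, a i * x i)
      = gaussianReal (∑ i, a i * m i) (∑ i, ((a i)^2).toNNReal * v i) := by
  intro n
  induction n with
  | zero =>
    intro a m v
    have h0 : (fun x : Fin 0 → ℝ => ∑ i, a i * x i) = fun _ => (0:ℝ) := by
      funext x; simp
    rw [h0, Measure.map_const, measure_univ, one_smul]
    simp [gaussianReal_zero_var]
  | succ n ih =>
    intro a m v
    set μ : Fin (n+1) → Measure ℝ := fun i => gaussianReal (m i) (v i) with hμ
    have hmp := measurePreserving_piFinSuccAbove μ 0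
    set e := MeasurableEquiv.piFinSuccAbove (fun _ : Fin (n+1) => ℝ) 0 with he
    have hpi : Measure.pi μ = ((μ 0).prod (Measure.pi fun j => μ ((0:Fin (n+1)).succAbove j))).map e.symm := by
      rw [← hmp.map_eq, Measure.map_map e.symm.measurable e.measurable]
      simp
    have hS : (fun x : Fin (n+1) → ℝ => ∑ i, a i * x i) ∘ e.symm
        = fun p : ℝ × (Fin n → ℝ) => (a 0 * p.1) + ∑ j, a j.succ * p.2 j := by
      funext p
      simp only [Function.comp_apply, he, MeasurableEquiv.piFinSuccAbove_symm_apply]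
      rw [Fin.sum_univ_succ]
      simp [Fin.insertNthEquiv]
    rw [hpi, Measure.map_map (by fun_prop) e.symm.measurable, hS]
    have hsplit : (fun p : ℝ × (Fin n → ℝ) => (a 0 * p.1) + ∑ j, a j.succ * p.2 j)
        = (fun q : ℝ × ℝ => q.1 + q.2) ∘ (Prod.map (fun x => a 0 * x) (fun w => ∑ j, a j.succ * w j)) := rfl
    rw [hsplit, ← Measure.map_map (by fun_prop) (by fun_prop),
      ← Measure.map_prod_map _ _ (by fun_prop) (by fun_prop)]
    have hsucc : ∀ j : Fin n, (0:Fin (n+1)).succAbove j = j.succ := fun j => rfl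
    simp_rw [hsucc, hμ]
    rw [gaussianReal_map_const_mul,
      ih (fun j => a j.succ) (fun j => m j.succ) (fun j => v j.succ),
      gaussianReal_conv, NNReal.mk, sq_mk_toNNReal]
    rw [Fin.sum_univ_succ, Fin.sum_univ_succ]

lemma gaussian_tilt (a : ℝ) (v : ℝ≥0) (hv : v ≠ 0) :
    (gaussianReal 0 v).withDensity (fun x => ENNReal.ofReal (rexp (a * x - a^2 * (v:ℝ)/2)))
      = gaussianReal (a * (v:ℝ)) v := by
  rw [gaussianReal_of_var_ne_zero _ hv, gaussianReal_of_var_ne_zero _ hv,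
    ← withDensity_mul _ (measurable_gaussianPDF 0 v) (by fun_prop)]
  congr 1
  funext x
  simp only [Pi.mul_apply, gaussianPDF]
  rw [← ENNReal.ofReal_mul (gaussianPDFReal_nonneg _ _ _)]
  congr 1
  rw [gaussianPDFReal, gaussianPDFReal, mul_assoc, ← Real.exp_add]
  congr 1
  have hvpos : (0:ℝ) < (v:ℝ) := NNReal.coe_pos.mpr (zero_lt_iff.mpr hv)
  field_simp
  ring

lemma withDensity_map_equiv {α β : Type*} [MeasurableSpace α] [MeasurableSpace β]
    (e : α ≃ᵐ β) (μ : Measure α) (w : β → ℝ≥0∞) (hw : Measurable w) :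
    (μ.map e).withDensity w = (μ.withDensity (w ∘ e)).map e := by
  ext s hs
  rw [withDensity_apply _ hs, Measure.map_apply e.measurable hs,
    withDensity_apply _ (hs.preimage e.measurable), Measure.restrict_map e.measurable hs,
    lintegral_map hw e.measurable]
  rfl

lemma withDensity_prod {α β : Type*} [MeasurableSpace α] [MeasurableSpace β]
    (μ : Measure α) (ν : Measure β) [SigmaFinite μ] [SigmaFinite ν]
    (f : α → ℝ≥0∞) (g : β → ℝ≥0∞) (hf : Measurable f) (hg : Measurable g)
    [SigmaFinite (μ.withDensity f)] [SigmaFinite (ν.withDensity g)] :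
    (μ.prod ν).withDensity (fun p => f p.1 * g p.2)
      = (μ.withDensity f).prod (ν.withDensity g) := by
  refine (Measure.prod_eq (μ := μ.withDensity f) (ν := ν.withDensity g) fun s t hs ht => ?_).symm
  rw [withDensity_apply _ (hs.prod ht), ← Measure.prod_restrict,
    lintegral_prod_mul hf.aemeasurable hg.aemeasurable,
    withDensity_apply _ hs, withDensity_apply _ ht]

lemma sq_mk_toNNReal' (c : ℝ) : (⟨c^2, sq_nonneg c⟩ : ℝ≥0) = (c^2).toNNReal := by
  ext
  simp [Real.coe_toNNReal _ (sq_nonneg c)]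

lemma gaussPi_tilt : ∀ (n : ℕ) (a : Fin n → ℝ) (v : Fin n → ℝ≥0), (∀ i, v i ≠ 0) →
    (Measure.pi fun i => gaussianReal 0 (v i)).withDensity
      (fun x => ENNReal.ofReal (rexp (∑ i, (a i * x i - (a i)^2 * (v i : ℝ)/2))))
    = Measure.pi fun i => gaussianReal (a i * (v i : ℝ)) (v i) := by
  intro n
  induction n with
  | zero =>
    intro a v hv
    have h0 : (fun x : Fin 0 → ℝ => ENNReal.ofReal (rexp (∑ i, (a i * x i - (a i)^2 * (v i : ℝ)/2))))
        = fun _ => (1 : ℝ≥0∞) := by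
      funext x; simp
    rw [h0]
    have h1 : ((fun _ : Fin 0 → ℝ => (1:ℝ≥0∞))) = (1 : (Fin 0 → ℝ) → ℝ≥0∞) := rfl
    rw [h1, withDensity_one]
    refine Measure.pi_eq fun s hs => ?_
    simp
  | succ n ih =>
    intro a v hv
    set μ : Fin (n+1) → Measure ℝ := fun i => gaussianReal 0 (v i) with hμ
    have hmp := measurePreserving_piFinSuccAbove μ 0
    set e := MeasurableEquiv.piFinSuccAbove (fun _ : Fin (n+1) => ℝ) 0 with he
    set Q := ((μ 0).prod (Measure.pi fun j => μ ((0:Fin (n+1)).succAbove j))) with hQ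
    have hpi : Measure.pi μ = Q.map e.symm := by
      rw [← hmp.map_eq, Measure.map_map e.symm.measurable e.measurable]
      simp
    set w : (Fin (n+1) → ℝ) → ℝ≥0∞ :=
      fun x => ENNReal.ofReal (rexp (∑ i, (a i * x i - (a i)^2 * (v i : ℝ)/2))) with hw
    have hwm : Measurable w := by
      apply Measurable.ennreal_ofReal
      apply Measurable.exp
      exact Finset.measurable_sum _ fun i _ => by fun_prop
    set f : ℝ → ℝ≥0∞ := fun x => ENNReal.ofReal (rexp (a 0 * x - (a 0)^2 * (v 0 : ℝ)/2)) with hf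
    set g : (Fin n → ℝ) → ℝ≥0∞ :=
      fun y => ENNReal.ofReal (rexp (∑ j : Fin n, (a j.succ * y j - (a j.succ)^2 * (v j.succ : ℝ)/2))) with hg
    have hfm : Measurable f := by fun_prop
    have hgm : Measurable g := by
      apply Measurable.ennreal_ofReal
      apply Measurable.exp
      exact Finset.measurable_sum _ fun i _ => by fun_prop
    have hcomp : (w ∘ e.symm) = fun p : ℝ × (Fin n → ℝ) => f p.1 * g p.2 := by
      funext p
      simp only [Function.comp_apply, he, MeasurableEquiv.piFinSuccAbove_symm_apply, hw, hf, hg]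
      rw [Fin.sum_univ_succ, Real.exp_add, ENNReal.ofReal_mul (Real.exp_nonneg _)]
      have e0 : ((Fin.insertNthEquiv (fun _ : Fin (n+1) => ℝ) 0) (p.1, p.2)) 0 = p.1 := by
        simp [Fin.insertNthEquiv]
      have eS : ∀ j : Fin n, ((Fin.insertNthEquiv (fun _ : Fin (n+1) => ℝ) 0) (p.1, p.2)) j.succ = p.2 j := by
        intro j
        simp [Fin.insertNthEquiv]
      rw [e0]
      have hrw : ∀ j : Fin n,
          a j.succ * ((Fin.insertNthEquiv (fun _ : Fin (n+1) => ℝ) 0) (p.1, p.2)) j.succ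
              - a j.succ^2 * (v j.succ : ℝ)/2
            = a j.succ * p.2 j - a j.succ^2 * (v j.succ : ℝ)/2 := fun j => by rw [eS j]
      simp_rw [hrw]
    have htilt0 : (μ 0).withDensity f = gaussianReal (a 0 * (v 0 : ℝ)) (v 0) :=
      gaussian_tilt (a 0) (v 0) (hv 0)
    have htiltS : (Measure.pi fun j => μ ((0:Fin (n+1)).succAbove j)).withDensity g
        = Measure.pi fun j => gaussianReal (a j.succ * (v j.succ : ℝ)) (v j.succ) := by
      have := ih (fun j => a j.succ) (fun j => v j.succ) (fun j => hv j.succ)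
      exact this
    haveI : SigmaFinite ((μ 0).withDensity f) := by rw [htilt0]; infer_instance
    haveI : SigmaFinite ((Measure.pi fun j => μ ((0:Fin (n+1)).succAbove j)).withDensity g) := by
      rw [htiltS]; infer_instance
    rw [hpi, withDensity_map_equiv e.symm Q w hwm, hcomp, hQ,
      withDensity_prod _ _ f g hfm hgm, htilt0, htiltS]
    have hmp2 := measurePreserving_piFinSuccAbove
      (fun i : Fin (n+1) => gaussianReal (a i * (v i : ℝ)) (v i)) 0
    have hshow : (Measure.pi fun j : Fin n => gaussianReal (a j.succ * (v j.succ : ℝ)) (v j.succ))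
        = Measure.pi fun j : Fin n => gaussianReal (a ((0:Fin (n+1)).succAbove j) * (v ((0:Fin (n+1)).succAbove j) : ℝ)) (v ((0:Fin (n+1)).succAbove j)) := rfl
    rw [hshow, ← hmp2.map_eq, Measure.map_map e.symm.measurable e.measurable]
    simp

lemma gaussPi_map_add (n : ℕ) (δ : Fin n → ℝ) (v : Fin n → ℝ≥0) :
    (Measure.pi fun i => gaussianReal 0 (v i)).map (fun x => x + δ)
      = Measure.pi fun i => gaussianReal (δ i) (v i) := by
  refine (Measure.pi_eq fun s hs => ?_).symm
  have hmeas : Measurable (fun x : Fin n → ℝ => x + δ) := by fun_prop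
  rw [Measure.map_apply hmeas (MeasurableSet.univ_pi fun i => hs i)]
  have hpre : (fun x : Fin n → ℝ => x + δ) ⁻¹' (Set.pi Set.univ s)
      = Set.pi Set.univ (fun i => (fun t => t + δ i) ⁻¹' s i) := by
    ext x
    simp [Set.mem_pi]
  rw [hpre, Measure.pi_pi]
  refine Finset.prod_congr rfl fun i _ => ?_
  rw [← Measure.map_apply (by fun_prop) (hs i), gaussianReal_map_add_const, zero_add]

lemma NP_le {X : Type*} [MeasurableSpace X] (μ : Measure X) [IsFiniteMeasure μ]
    (L : X → ℝ) (hL : Measurable L) (c t : ℝ) (A : Set X) (hA : MeasurableSet A)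
    (h : μ {x | L x ≤ t} ≤ μ A) :
    μ.withDensity (fun x => ENNReal.ofReal (rexp (L x - c))) {x | L x ≤ t}
      ≤ μ.withDensity (fun x => ENNReal.ofReal (rexp (L x - c))) A := by
  set w : X → ℝ≥0∞ := fun x => ENNReal.ofReal (rexp (L x - c)) with hw
  have hwm : Measurable w := by fun_prop
  set ν := μ.withDensity w with hν
  set H : Set X := {x | L x ≤ t} with hH
  have hHm : MeasurableSet H := measurableSet_le hL measurable_const
  set k : ℝ≥0∞ := ENNReal.ofReal (rexp (t - c)) with hk
  -- μ (H \ A) ≤ μ (A \ H)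
  have hμdiff : μ (H \ A) ≤ μ (A \ H) := by
    have h1 : μ (H ∩ A) + μ (H \ A) = μ H := measure_inter_add_diff H hA
    have h2 : μ (A ∩ H) + μ (A \ H) = μ A := measure_inter_add_diff A hHm
    rw [Set.inter_comm] at h1
    have h3 : μ (A ∩ H) + μ (H \ A) ≤ μ (A ∩ H) + μ (A \ H) := by
      rw [h1, h2]; exact h
    exact (ENNReal.add_le_add_iff_left (measure_ne_top μ _)).mp h3
  have hsplitH : ν H = ν (H ∩ A) + ν (H \ A) := (measure_inter_add_diff H hA).symm
  have hsplitA : ν A = ν (A ∩ H) + ν (A \ H) := (measure_inter_add_diff A hHm).symm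
  have hHA : ν (H \ A) ≤ k * μ (H \ A) := by
    rw [hν, withDensity_apply _ (hHm.diff hA)]
    calc ∫⁻ x in H \ A, w x ∂μ ≤ ∫⁻ _ in H \ A, k ∂μ := by
          refine setLIntegral_mono measurable_const fun x hx => ?_
          rw [hw, hk]
          exact ENNReal.ofReal_le_ofReal (Real.exp_le_exp.2 (by have := hx.1; simp only [hH, Set.mem_setOf_eq] at this; linarith))
      _ = k * μ (H \ A) := by rw [setLIntegral_const]
  have hAH : k * μ (A \ H) ≤ ν (A \ H) := by
    rw [hν, withDensity_apply _ (hA.diff hHm)]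
    calc k * μ (A \ H) = ∫⁻ _ in A \ H, k ∂μ := by rw [setLIntegral_const]
      _ ≤ ∫⁻ x in A \ H, w x ∂μ := by
          refine setLIntegral_mono hwm fun x hx => ?_
          rw [hw, hk]
          refine ENNReal.ofReal_le_ofReal (Real.exp_le_exp.2 ?_)
          have := hx.2
          simp only [hH, Set.mem_setOf_eq, not_le] at this
          linarith
  calc ν H = ν (H ∩ A) + ν (H \ A) := hsplitH
    _ ≤ ν (H ∩ A) + k * μ (H \ A) := add_le_add_right hHA _
    _ ≤ ν (H ∩ A) + k * μ (A \ H) := add_le_add_right (mul_le_mul_right hμdiff k) _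
    _ ≤ ν (H ∩ A) + ν (A \ H) := add_le_add_right hAH _
    _ = ν A := by rw [Set.inter_comm]; exact hsplitA.symm

lemma gauss_Iic_scale {s : ℝ} (hs : 0 < s) (t : ℝ) :
    (gaussianReal 0 ((s^2).toNNReal)) (Set.Iic t) = (gaussianReal 0 1) (Set.Iic (t/s)) := by
  have hmap : (gaussianReal 0 1).map (fun x => s * x) = gaussianReal 0 ((s^2).toNNReal) := by
    rw [gaussianReal_map_const_mul]
    congr 1
    · ring
    · rw [mul_one, NNReal.mk, sq_mk_toNNReal]
  rw [← hmap, Measure.map_apply (by fun_prop) measurableSet_Iic]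
  congr 1
  ext x
  simp only [Set.mem_preimage, Set.mem_Iic]
  rw [mul_comm]
  exact (le_div_iff₀ hs).symm

theorem noise_resilience {Γ : Type*} [Fintype Γ] [MeasurableSpace Γ] [MeasurableSingletonClass Γ]
    (hcard : 2 ≤ Fintype.card Γ)
    (d : ℕ) (f : (Fin d → ℝ) → Γ) (hf : Measurable f)
    (θ σ : Fin d → ℝ) (hσ : ∀ i, 0 < σ i)
    (ca : Γ) (pA pB : ℝ) (hpA : pA ∈ Set.Ioo (0 : ℝ) 1) (hpB : pB ∈ Set.Ioo (0 : ℝ) 1)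
    (hBA : pB ≤ pA)
    (hA : pA ≤ ((gaussPi d 0 σ) {v | f (θ + v) = ca}).toReal)
    (hB : ∀ c, c ≠ ca → ((gaussPi d 0 σ) {v | f (θ + v) = c}).toReal ≤ pB)
    (δ : Fin d → ℝ)
    (hδ : Real.sqrt (∑ i, (δ i / σ i) ^ 2) < (PhiInv pA - PhiInv pB) / 2) :
    ∀ c, c ≠ ca → ((gaussPi d 0 σ) {v | f (θ + δ + v) = c}).toReal <
      ((gaussPi d 0 σ) {v | f (θ + δ + v) = ca}).toReal := by
  intro c hc
  set v : Fin d → ℝ≥0 := fun i => ((σ i)^2).toNNReal with hv_def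
  have hvne : ∀ i, v i ≠ 0 := by
    intro i
    rw [hv_def]
    simp only [ne_eq, Real.toNNReal_eq_zero, not_le]
    exact pow_pos (hσ i) 2
  have hvco : ∀ i, ((v i : ℝ)) = (σ i)^2 := fun i => Real.coe_toNNReal _ (sq_nonneg _)
  have hgp : gaussPi d 0 σ = Measure.pi fun i => gaussianReal 0 (v i) := rfl
  set μ := Measure.pi fun i => gaussianReal 0 (v i) with hμ_def
  set s2 : ℝ := ∑ i, (δ i / σ i)^2 with hs2_def
  -- measurable sets
  set Ac : Γ → Set (Fin d → ℝ) := fun c' => {x | f (θ + x) = c'} with hAc_def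
  have hAm : ∀ c', MeasurableSet (Ac c') := by
    intro c'
    have : Ac c' = (fun x => f (θ + x)) ⁻¹' {c'} := rfl
    rw [this]
    exact (hf.comp (by fun_prop)) (measurableSet_singleton c')
  have hpApB : PhiInv pB < PhiInv pA := by
    have h0 : (0:ℝ) ≤ Real.sqrt (∑ i, (δ i / σ i) ^ 2) := Real.sqrt_nonneg _
    linarith
  have hpBA : pB < pA := by
    have := Phi_strictMono hpApB
    rwa [Phi_PhiInv hpB, Phi_PhiInv hpA] at this
  by_cases hzero : s2 = 0
  · -- δ = 0
    have hδ0 : δ = 0 := by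
      funext i
      have hterm : (δ i / σ i)^2 = 0 :=
        (Finset.sum_eq_zero_iff_of_nonneg (fun j _ => sq_nonneg (δ j / σ j))).mp hzero i
          (Finset.mem_univ i)
      have hdiv : δ i / σ i = 0 := by
        exact (pow_eq_zero_iff two_ne_zero).mp hterm
      have hσi : σ i ≠ 0 := (hσ i).ne'
      field_simp at hdiv
      simpa using hdiv
    rw [hδ0, add_zero]
    have h1 := hB c hc
    linarith
  · -- main case
    have hs2nonneg : 0 ≤ s2 := Finset.sum_nonneg fun i _ => sq_nonneg _
    have hs2pos : 0 < s2 := lt_of_le_of_ne hs2nonneg (Ne.symm hzero)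
    set s : ℝ := Real.sqrt s2 with hs_def
    have hspos : 0 < s := Real.sqrt_pos.mpr hs2pos
    have hssq : s^2 = s2 := Real.sq_sqrt hs2nonneg
    have hs_lt : s < (PhiInv pA - PhiInv pB) / 2 := hδ
    set a : Fin d → ℝ := fun i => δ i / (σ i)^2 with ha_def
    set L : (Fin d → ℝ) → ℝ := fun x => ∑ i, a i * x i with hL_def
    have hLm : Measurable L := Finset.measurable_sum _ fun i _ => by fun_prop
    -- law of L under μ
    have hlaw : μ.map L = gaussianReal 0 (s2.toNNReal) := by
      rw [hμ_def, hL_def]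
      have := gaussPi_map_sum d a (fun _ => 0) v
      simp only [mul_zero, Finset.sum_const_zero] at this
      rw [this]
      congr 1
      ext
      push_cast
      rw [Real.coe_toNNReal _ hs2nonneg, hs2_def]
      refine Finset.sum_congr rfl fun i _ => ?_
      rw [ha_def, hvco i, Real.coe_toNNReal _ (sq_nonneg _)]
      have := (hσ i).ne'
      field_simp
    have hLδ : L δ = s2 := by
      rw [hL_def, hs2_def]
      refine Finset.sum_congr rfl fun i _ => ?_
      rw [ha_def]
      have := (hσ i).ne'
      field_simp
    set w : (Fin d → ℝ) → ℝ≥0∞ := fun x => ENNReal.ofReal (rexp (L x - s2/2)) with hw_def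
    set ν := μ.withDensity w with hν_def
    have hν_eq : ν = Measure.pi fun i => gaussianReal (δ i) (v i) := by
      rw [hν_def, hμ_def]
      have hexp : ∀ x, L x - s2/2 = ∑ i, (a i * x i - (a i)^2 * (v i : ℝ)/2) := by
        intro x
        rw [Finset.sum_sub_distrib]
        have h1 : ∑ i, (a i)^2 * (v i : ℝ)/2 = s2/2 := by
          rw [hs2_def, ← Finset.sum_div]
          congr 1
          refine Finset.sum_congr rfl fun i _ => ?_
          rw [ha_def, hvco i]
          have := (hσ i).ne'
          field_simp
        rw [h1]
      have hw2 : w = fun x => ENNReal.ofReal (rexp (∑ i, (a i * x i - (a i)^2 * (v i:ℝ)/2))) := by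
        funext x
        exact congrArg ENNReal.ofReal (congrArg rexp (hexp x))
      rw [hw2, gaussPi_tilt d a v hvne]
      congr 1
      funext i
      congr 1
      rw [ha_def, hvco i]
      have := (hσ i).ne'
      field_simp
    have hν_map : ν = μ.map (fun x => x + δ) := by
      rw [hν_eq, hμ_def, gaussPi_map_add d δ v]
    haveI : IsProbabilityMeasure μ := by rw [hμ_def]; infer_instance
    haveI : IsProbabilityMeasure ν := by rw [hν_eq]; infer_instance
    -- goal measures are ν of the Ac sets
    have hset : ∀ c', (gaussPi d 0 σ) {x | f (θ + δ + x) = c'} = ν (Ac c') := by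
      intro c'
      rw [hν_map, Measure.map_apply (by fun_prop) (hAm c'), hgp]
      congr 1
      ext x
      simp only [Set.mem_preimage, hAc_def, Set.mem_setOf_eq]
      rw [← add_assoc, add_right_comm]
    -- CDF values
    have hPhiμ : ∀ t, (μ {x | L x ≤ t}).toReal = Phi (t/s) := by
      intro t
      have h1 : μ {x | L x ≤ t} = (μ.map L) (Set.Iic t) := by
        rw [Measure.map_apply hLm measurableSet_Iic]
        rfl
      rw [h1, hlaw, show s2.toNNReal = (s^2).toNNReal by rw [hssq], gauss_Iic_scale hspos t]
      rfl
    have hνH : ∀ t, (ν {x | L x ≤ t}).toReal = Phi (t/s - s) := by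
      intro t
      rw [hν_map, Measure.map_apply (by fun_prop) (measurableSet_le hLm measurable_const)]
      have hpre : (fun x => x + δ) ⁻¹' {x | L x ≤ t} = {x | L x ≤ t - s2} := by
        ext x
        simp only [Set.mem_preimage, Set.mem_setOf_eq]
        have hadd : L (x + δ) = L x + L δ := by
          rw [hL_def]
          simp only [Pi.add_apply, mul_add]
          rw [Finset.sum_add_distrib]
        rw [hadd, hLδ]
        constructor <;> intro h <;> linarith
      rw [hpre, hPhiμ (t - s2)]
      congr 1
      have hdiv : s2 / s = s := by
        rw [← hssq]
        field_simp
      rw [sub_div, hdiv]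
    -- lower bound for class ca
    set tA : ℝ := s * PhiInv pA with htA_def
    have hμHA : (μ {x | L x ≤ tA}).toReal = pA := by
      rw [hPhiμ, htA_def, mul_div_cancel_left₀ _ hspos.ne', Phi_PhiInv hpA]
    have hμA_ge : μ {x | L x ≤ tA} ≤ μ (Ac ca) := by
      rw [← ENNReal.toReal_le_toReal (measure_ne_top μ _) (measure_ne_top μ _)]
      rw [hμHA]
      exact le_trans hA (le_of_eq (by rw [hgp]))
    have hNP_A : ν {x | L x ≤ tA} ≤ ν (Ac ca) := by
      rw [hν_def, hw_def]
      exact NP_le μ L hLm (s2/2) tA (Ac ca) (hAm ca) hμA_ge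
    have hνA : Phi (PhiInv pA - s) ≤ (ν (Ac ca)).toReal := by
      have := (ENNReal.toReal_le_toReal (measure_ne_top ν _) (measure_ne_top ν _)).mpr hNP_A
      rwa [hνH tA, htA_def, mul_div_cancel_left₀ _ hspos.ne'] at this
    -- upper bound for class c
    set tB : ℝ := s * (-(PhiInv pB)) with htB_def
    have hμHB : (μ {x | L x ≤ tB}).toReal = 1 - pB := by
      rw [hPhiμ, htB_def, mul_div_cancel_left₀ _ hspos.ne', Phi_neg, Phi_PhiInv hpB]
    have hcompl_toReal : (μ (Ac c)ᶜ).toReal = 1 - (μ (Ac c)).toReal := by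
      rw [prob_compl_eq_one_sub (hAm c), ENNReal.toReal_sub_of_le prob_le_one ENNReal.one_ne_top]
      simp
    have hμB_ge : μ {x | L x ≤ tB} ≤ μ (Ac c)ᶜ := by
      rw [← ENNReal.toReal_le_toReal (measure_ne_top μ _) (measure_ne_top μ _)]
      rw [hμHB, hcompl_toReal]
      have hBc := hB c hc
      rw [hgp] at hBc
      linarith
    have hNP_B : ν {x | L x ≤ tB} ≤ ν (Ac c)ᶜ := by
      rw [hν_def, hw_def]
      exact NP_le μ L hLm (s2/2) tB (Ac c)ᶜ (hAm c).compl hμB_ge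
    have hνB : (ν (Ac c)).toReal ≤ Phi (PhiInv pB + s) := by
      have h1 := (ENNReal.toReal_le_toReal (measure_ne_top ν _) (measure_ne_top ν _)).mpr hNP_B
      rw [hνH tB, htB_def, mul_div_cancel_left₀ _ hspos.ne'] at h1
      have h2 : (ν (Ac c)ᶜ).toReal = 1 - (ν (Ac c)).toReal := by
        rw [prob_compl_eq_one_sub (hAm c), ENNReal.toReal_sub_of_le prob_le_one ENNReal.one_ne_top]
        simp
      rw [h2] at h1
      have h3 : -(PhiInv pB) - s = -(PhiInv pB + s) := by ring
      rw [h3, Phi_neg] at h1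
      linarith
    -- conclude
    rw [hset c, hset ca]
    have hlt : Phi (PhiInv pB + s) < Phi (PhiInv pA - s) :=
      Phi_strictMono (by linarith)
    linarith
end

section
/- Anisotropic Neyman–Pearson lower-bound lemma: Let X ~ N(x, Σ), Y ~ N(x+δ, Σ) with Σ = diag(σ²), λ = δ ⊘ σ^{∘2} ≠ 0, and let h : ℝᵈ → {0,1} be measurable. If S = {z : λᵀz ≤ β} and ℙ(h(X)=1) ≥ ℙ(X ∈ S), then ℙ(h(Y)=1) ≥ ℙ(Y ∈ S). -/
open MeasureTheory ProbabilityTheory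

lemma lintegral_pi_prod {n : ℕ} {E : Fin n → Type*} [∀ i, MeasurableSpace (E i)]
    (μ : ∀ i, Measure (E i)) [∀ i, SigmaFinite (μ i)]
    (f : ∀ i, E i → ENNReal) (hf : ∀ i, Measurable (f i)) :
    ∫⁻ x, ∏ i, f i (x i) ∂(Measure.pi μ) = ∏ i, ∫⁻ x, f i x ∂(μ i) := by
  induction n with
  | zero => simp [lintegral_const, Measure.pi_univ]
  | succ n ih =>
    rw [← ((measurePreserving_piFinSuccAbove μ 0).symm).lintegral_comp_emb
      (MeasurableEquiv.measurableEmbedding _)]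
    simp_rw [MeasurableEquiv.piFinSuccAbove_symm_apply, Fin.insertNthEquiv,
      Fin.prod_univ_succAbove _ 0, Equiv.coe_fn_mk, Fin.insertNth_apply_same,
      Fin.insertNth_apply_succAbove]
    have hg : Measurable fun (y : (j : Fin n) → E (Fin.succAbove 0 j)) =>
        ∏ j : Fin n, f (Fin.succAbove 0 j) (y j) :=
      Finset.measurable_prod _ fun i _ => (hf _).comp (measurable_pi_apply i)
    rw [lintegral_prod_mul (g := fun (y : (j : Fin n) → E (Fin.succAbove 0 j)) =>
        ∏ j : Fin n, f (Fin.succAbove 0 j) (y j))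
      ((hf 0).aemeasurable) hg.aemeasurable]
    rw [ih _ _ (fun i => hf _)]

lemma pdfReal_shift (m d : ℝ) (v : NNReal) (hv : 0 < (v : ℝ)) (t : ℝ) :
    Real.exp ((d / v) * (t - m - d / 2)) * gaussianPDFReal m v t
      = gaussianPDFReal (m + d) v t := by
  simp only [gaussianPDFReal]
  rw [mul_left_comm, ← Real.exp_add]
  congr 2
  field_simp
  ring

lemma pdf_shift (m d : ℝ) (v : NNReal) (hv : 0 < (v : ℝ)) (t : ℝ) :
    ENNReal.ofReal (Real.exp ((d / v) * (t - m - d / 2))) * gaussianPDF m v t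
      = gaussianPDF (m + d) v t := by
  rw [gaussianPDF, gaussianPDF, ← ENNReal.ofReal_mul (Real.exp_nonneg _), pdfReal_shift m d v hv t]

lemma gaussPi_shift (d : ℕ) (x δ σ : Fin d → ℝ) (hσ : ∀ i, 0 < σ i)
    (lam : Fin d → ℝ) (hlam : ∀ i, lam i = δ i / σ i ^ 2) :
    gaussPi d (x + δ) σ = (gaussPi d x σ).withDensity
      (fun z => ∏ i, ENNReal.ofReal (Real.exp (lam i * (z i - x i - δ i / 2)))) := by
  have hv : ∀ i, ((σ i ^ 2).toNNReal : ℝ) = σ i ^ 2 := fun i =>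
    Real.coe_toNNReal _ (sq_nonneg _)
  have hvpos : ∀ i, (0 : ℝ) < ((σ i ^ 2).toNNReal : ℝ) := fun i => by
    rw [hv i]; exact pow_pos (hσ i) 2
  have hvne : ∀ i, (σ i ^ 2).toNNReal ≠ 0 := fun i => by
    intro hc
    have := hvpos i
    rw [hc] at this
    simp at this
  unfold gaussPi
  refine Measure.pi_eq fun s hs => ?_
  rw [withDensity_apply _ (MeasurableSet.univ_pi hs)]
  have hind : ∀ z : Fin d → ℝ,
      (Set.univ.pi s).indicator
        (fun z => ∏ i, ENNReal.ofReal (Real.exp (lam i * (z i - x i - δ i / 2)))) z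
      = ∏ i, (s i).indicator
          (fun t => ENNReal.ofReal (Real.exp (lam i * (t - x i - δ i / 2)))) (z i) := by
    intro z
    by_cases hz : z ∈ Set.univ.pi s
    · rw [Set.indicator_of_mem hz]
      exact Finset.prod_congr rfl fun i _ =>
        (Set.indicator_of_mem (hz i (Set.mem_univ i))
          (fun t => ENNReal.ofReal (Real.exp (lam i * (t - x i - δ i / 2))))).symm
    · rw [Set.indicator_of_notMem hz]
      simp only [Set.mem_pi, Set.mem_univ, forall_true_left, not_forall] at hz
      obtain ⟨i, hi⟩ := hz
      exact (Finset.prod_eq_zero (Finset.mem_univ i)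
        (by rw [Set.indicator_of_notMem hi])).symm
  rw [← lintegral_indicator (MeasurableSet.univ_pi hs)]
  simp_rw [hind]
  rw [lintegral_pi_prod (fun i => gaussianReal (x i) ((σ i ^ 2).toNNReal))
    (fun i => (s i).indicator (fun t => ENNReal.ofReal (Real.exp (lam i * (t - x i - δ i / 2)))))
    (fun i => Measurable.indicator (Measurable.ennreal_ofReal (by fun_prop)) (hs i))]
  refine Finset.prod_congr rfl fun i _ => ?_
  rw [lintegral_indicator (hs i), Pi.add_apply,
    gaussianReal_of_var_ne_zero _ (hvne i),
    setLIntegral_withDensity_eq_setLIntegral_mul _ (measurable_gaussianPDF _ _)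
      (Measurable.ennreal_ofReal (by fun_prop)) (hs i),
    gaussianReal_of_var_ne_zero _ (hvne i), withDensity_apply _ (hs i)]
  refine setLIntegral_congr_fun (hs i) (fun t _ => ?_)
  have : lam i = δ i / ((σ i ^ 2).toNNReal : ℝ) := by rw [hv i, hlam i]
  rw [Pi.mul_apply]
  rw [this]
  rw [mul_comm]
  exact pdf_shift (x i) (δ i) _ (hvpos i) t

theorem neyman_pearson_lower (d : ℕ) (x δ σ : Fin d → ℝ) (hσ : ∀ i, 0 < σ i) (hδ : δ ≠ 0)
    (lam : Fin d → ℝ) (hlam : ∀ i, lam i = δ i / σ i ^ 2)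
    (β : ℝ) (h : (Fin d → ℝ) → Bool) (hh : Measurable h)
    (S : Set (Fin d → ℝ)) (hS : S = {z | ∑ i, lam i * z i ≤ β})
    (hlow : (gaussPi d x σ) S ≤ (gaussPi d x σ) {z | h z = true}) :
    (gaussPi d (x + δ) σ) S ≤ (gaussPi d (x + δ) σ) {z | h z = true} := by
  set P := gaussPi d x σ with hP
  set Q := gaussPi d (x + δ) σ with hQdef
  set A : Set (Fin d → ℝ) := {z | h z = true} with hA
  set g : (Fin d → ℝ) → ENNReal :=
    fun z => ∏ i, ENNReal.ofReal (Real.exp (lam i * (z i - x i - δ i / 2))) with hg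
  have hQ : Q = P.withDensity g := gaussPi_shift d x δ σ hσ lam hlam
  have hgm : Measurable g :=
    Finset.measurable_prod _ fun i _ => Measurable.ennreal_ofReal (by fun_prop)
  have hgeq : ∀ z, g z = ENNReal.ofReal
      (Real.exp (∑ i, lam i * (z i - x i - δ i / 2))) := by
    intro z
    show ∏ i, ENNReal.ofReal (Real.exp (lam i * (z i - x i - δ i / 2))) = _
    rw [Real.exp_sum, ← ENNReal.ofReal_prod_of_nonneg (fun i _ => Real.exp_nonneg _)]
  set t : ENNReal :=
    ENNReal.ofReal (Real.exp (β - ∑ i, (lam i * x i + lam i * δ i / 2))) with ht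
  have hsum : ∀ z : Fin d → ℝ, ∑ i, lam i * (z i - x i - δ i / 2)
      = (∑ i, lam i * z i) - ∑ i, (lam i * x i + lam i * δ i / 2) := by
    intro z
    rw [← Finset.sum_sub_distrib]
    exact Finset.sum_congr rfl fun i _ => by ring
  have hgS : ∀ z ∈ S, g z ≤ t := by
    intro z hz
    rw [hS] at hz
    rw [hgeq, ht]
    exact ENNReal.ofReal_le_ofReal (Real.exp_le_exp.mpr
      (by rw [hsum]; exact sub_le_sub_right hz _))
  have hgSc : ∀ z ∉ S, t ≤ g z := by
    intro z hz
    rw [hS] at hz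
    rw [hgeq, ht]
    exact ENNReal.ofReal_le_ofReal (Real.exp_le_exp.mpr
      (by rw [hsum]; exact sub_le_sub_right (le_of_not_ge hz) _))
  have hSm : MeasurableSet S := by
    rw [hS]
    exact measurableSet_le (by fun_prop) measurable_const
  have hAm : MeasurableSet A := hh (measurableSet_singleton true)
  haveI : IsProbabilityMeasure P := by
    rw [hP]; unfold gaussPi; infer_instance
  have hPdiff : P (S \ A) ≤ P (A \ S) := by
    have h1 : P (S ∩ A) + P (S \ A) = P S := measure_inter_add_diff S hAm
    have h2 : P (A ∩ S) + P (A \ S) = P A := measure_inter_add_diff A hSm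
    have h3 : P (S ∩ A) + P (S \ A) ≤ P (S ∩ A) + P (A \ S) := by
      rw [h1, Set.inter_comm S A, h2]; exact hlow
    exact (ENNReal.add_le_add_iff_left (measure_ne_top P _)).mp h3
  have hchain : Q (S \ A) ≤ Q (A \ S) := by
    rw [hQ, withDensity_apply _ (hSm.diff hAm), withDensity_apply _ (hAm.diff hSm)]
    calc ∫⁻ z in S \ A, g z ∂P ≤ ∫⁻ _ in S \ A, t ∂P :=
          setLIntegral_mono measurable_const fun z hz => hgS z hz.1
      _ = t * P (S \ A) := setLIntegral_const _ _
      _ ≤ t * P (A \ S) := mul_le_mul_right hPdiff t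
      _ = ∫⁻ _ in A \ S, t ∂P := (setLIntegral_const _ _).symm
      _ ≤ ∫⁻ z in A \ S, g z ∂P := setLIntegral_mono hgm fun z hz => hgSc z hz.2
  calc Q S = Q (S ∩ A) + Q (S \ A) := (measure_inter_add_diff S hAm).symm
    _ ≤ Q (S ∩ A) + Q (A \ S) := add_le_add_right hchain _
    _ = Q (A ∩ S) + Q (A \ S) := by rw [Set.inter_comm]
    _ = Q A := measure_inter_add_diff A hSm
end

section
/- Anisotropic Neyman–Pearson upper-bound lemma: Let X ~ N(x, Σ), Y ~ N(x+δ, Σ) with Σ = diag(σ²), λ = δ ⊘ σ^{∘2} ≠ 0, and let h : ℝᵈ → {0,1} be measurable. If S = {z : λᵀz ≥ β} and ℙ(h(X)=1) ≤ ℙ(X ∈ S), then ℙ(h(Y)=1) ≤ ℙ(Y ∈ S). -/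
open MeasureTheory ProbabilityTheory
open scoped ENNReal NNReal

/-- Auxiliary: one-dimensional Gaussian mean shift as a density. -/
lemma gaussianReal_shift_aux (m dl s : ℝ) (hs : 0 < s) :
    gaussianReal (m + dl) ((s ^ 2).toNNReal) =
      (gaussianReal m ((s ^ 2).toNNReal)).withDensity
        (fun t => ENNReal.ofReal
          (Real.exp (dl / s ^ 2 * t - dl / s ^ 2 * m - dl / s ^ 2 * dl / 2))) := by
  have hv0 : (s ^ 2).toNNReal ≠ 0 := by
    simp only [ne_eq, ← NNReal.coe_eq_zero]
    rw [Real.coe_toNNReal _ (sq_nonneg s)]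
    positivity
  have hvc : (((s ^ 2).toNNReal : ℝ≥0) : ℝ) = s ^ 2 := Real.coe_toNNReal _ (sq_nonneg s)
  have hLmeas : Measurable (fun t : ℝ => ENNReal.ofReal
      (Real.exp (dl / s ^ 2 * t - dl / s ^ 2 * m - dl / s ^ 2 * dl / 2))) := by
    fun_prop
  rw [gaussianReal_of_var_ne_zero _ hv0, gaussianReal_of_var_ne_zero _ hv0,
    ← withDensity_mul _ (measurable_gaussianPDF _ _) hLmeas]
  congr 1
  funext t
  simp only [Pi.mul_apply]
  rw [gaussianPDF, gaussianPDF, ← ENNReal.ofReal_mul (gaussianPDFReal_nonneg _ _ _)]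
  congr 1
  simp only [gaussianPDFReal, mul_assoc, ← Real.exp_add]
  congr 1
  rw [hvc]
  have hs2 : s ^ 2 ≠ 0 := by positivity
  field_simp
  ring

/-- Auxiliary: lintegral of a product function over a finite product measure. -/
lemma lintegral_pi_prod_aux :
    ∀ (n : ℕ) (μ : Fin n → Measure ℝ), (∀ i, SigmaFinite (μ i)) →
      ∀ (f : Fin n → ℝ → ℝ≥0∞), (∀ i, Measurable (f i)) →
        ∫⁻ z, ∏ i, f i (z i) ∂Measure.pi μ = ∏ i, ∫⁻ t, f i t ∂μ i := by
  intro n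
  induction n with
  | zero =>
    intro μ hsf f hf
    haveI := hsf
    simp [lintegral_const, Measure.pi_univ]
  | succ n ih =>
    intro μ hsf f hf
    haveI := hsf
    have hmp := measurePreserving_piFinSuccAbove μ 0
    set e := MeasurableEquiv.piFinSuccAbove (fun _ : Fin (n + 1) => ℝ) 0 with he
    have hglue : ∀ z : Fin (n + 1) → ℝ,
        (∏ i, f i (z i)) =
          f 0 ((e z).1) * ∏ j, f (Fin.succAbove 0 j) ((e z).2 j) := by
      intro z
      rw [Fin.prod_univ_succAbove (fun i => f i (z i)) 0]
      rfl
    calc ∫⁻ z, ∏ i, f i (z i) ∂Measure.pi μ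
        = ∫⁻ z, (fun p : ℝ × (Fin n → ℝ) =>
            f 0 p.1 * ∏ j, f (Fin.succAbove 0 j) (p.2 j)) (e z) ∂Measure.pi μ := by
          simp_rw [hglue]
      _ = ∫⁻ p, f 0 p.1 * ∏ j, f (Fin.succAbove 0 j) (p.2 j)
            ∂((μ 0).prod (Measure.pi fun j => μ (Fin.succAbove 0 j))) := by
          refine hmp.lintegral_comp
            (f := fun p : ℝ × (Fin n → ℝ) => f 0 p.1 * ∏ j, f (Fin.succAbove 0 j) (p.2 j)) ?_
          exact ((hf 0).comp measurable_fst).mul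
            (Finset.measurable_prod _ fun j _ =>
              (hf _).comp ((measurable_pi_apply j).comp measurable_snd))
      _ = (∫⁻ t, f 0 t ∂μ 0) *
            ∫⁻ y, ∏ j, f (Fin.succAbove 0 j) (y j) ∂(Measure.pi fun j => μ (Fin.succAbove 0 j)) := by
          exact lintegral_prod_mul (hf 0).aemeasurable
            (Finset.measurable_prod _ fun j _ =>
              (hf _).comp (measurable_pi_apply j)).aemeasurable
      _ = (∫⁻ t, f 0 t ∂μ 0) * ∏ j, ∫⁻ t, f (Fin.succAbove 0 j) t ∂μ (Fin.succAbove 0 j) := by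
          rw [ih (fun j => μ (Fin.succAbove 0 j)) (fun j => hsf _)
            (fun j => f (Fin.succAbove 0 j)) (fun j => hf _)]
      _ = ∏ i, ∫⁻ t, f i t ∂μ i := (Fin.prod_univ_succAbove (fun i => ∫⁻ t, f i t ∂μ i) 0).symm

/-- Auxiliary: a product of densities gives the density of the product measure. -/
lemma pi_withDensity_aux {n : ℕ} (μ ν : Fin n → Measure ℝ)
    [∀ i, SigmaFinite (μ i)] [∀ i, SigmaFinite (ν i)]
    (f : Fin n → ℝ → ℝ≥0∞) (hf : ∀ i, Measurable (f i))
    (hν : ∀ i, ν i = (μ i).withDensity (f i)) :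
    Measure.pi ν = (Measure.pi μ).withDensity (fun z => ∏ i, f i (z i)) := by
  refine Measure.pi_eq (μ := ν) fun s hs => ?_
  rw [withDensity_apply _ (MeasurableSet.univ_pi hs),
    ← lintegral_indicator (MeasurableSet.univ_pi hs)]
  have hind : ∀ z : Fin n → ℝ,
      (Set.pi Set.univ s).indicator (fun z => ∏ i, f i (z i)) z =
        ∏ i, (s i).indicator (f i) (z i) := by
    intro z
    by_cases hz : z ∈ Set.pi Set.univ s
    · rw [Set.indicator_of_mem hz]
      exact Finset.prod_congr rfl fun i _ =>
        (Set.indicator_of_mem (hz i (Set.mem_univ i)) _).symm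
    · rw [Set.indicator_of_notMem hz]
      have : ∃ i, z i ∉ s i := by simpa [Set.mem_pi] using hz
      obtain ⟨i, hi⟩ := this
      exact (Finset.prod_eq_zero (Finset.mem_univ i) (Set.indicator_of_notMem hi _)).symm
  simp_rw [hind]
  rw [lintegral_pi_prod_aux n μ inferInstance (fun i => (s i).indicator (f i))
    (fun i => (hf i).indicator (hs i))]
  exact Finset.prod_congr rfl fun i _ => by
    rw [lintegral_indicator (hs i), hν i, withDensity_apply _ (hs i)]

theorem neyman_pearson_upper (d : ℕ) (x δ σ : Fin d → ℝ) (hσ : ∀ i, 0 < σ i) (hδ : δ ≠ 0)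
    (lam : Fin d → ℝ) (hlam : ∀ i, lam i = δ i / σ i ^ 2)
    (β : ℝ) (h : (Fin d → ℝ) → Bool) (hh : Measurable h)
    (S : Set (Fin d → ℝ)) (hS : S = {z | β ≤ ∑ i, lam i * z i})
    (hup : (gaussPi d x σ) {z | h z = true} ≤ (gaussPi d x σ) S) :
    (gaussPi d (x + δ) σ) {z | h z = true} ≤ (gaussPi d (x + δ) σ) S := by
  classical
  set μ := gaussPi d x σ with hμ
  set A : Set (Fin d → ℝ) := {z | h z = true} with hA
  -- densities
  set g : Fin d → ℝ → ℝ≥0∞ := fun i t =>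
    ENNReal.ofReal (Real.exp (lam i * t - lam i * x i - lam i * δ i / 2)) with hg
  have hgmeas : ∀ i, Measurable (g i) := by
    intro i; fun_prop
  set G : (Fin d → ℝ) → ℝ≥0∞ := fun z => ∏ i, g i (z i) with hGdef
  set T : (Fin d → ℝ) → ℝ := fun z => ∑ i, lam i * z i with hT
  set C : ℝ := ∑ i, (lam i * x i + lam i * δ i / 2) with hC
  have hGval : ∀ z, G z = ENNReal.ofReal (Real.exp (T z - C)) := by
    intro z
    calc G z = ENNReal.ofReal (∏ i, Real.exp (lam i * z i - lam i * x i - lam i * δ i / 2)) :=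
          (ENNReal.ofReal_prod_of_nonneg (fun i _ => (Real.exp_pos _).le)).symm
      _ = ENNReal.ofReal (Real.exp (∑ i, (lam i * z i - lam i * x i - lam i * δ i / 2))) := by
          rw [Real.exp_sum]
      _ = ENNReal.ofReal (Real.exp (T z - C)) := by
          congr 1
          congr 1
          rw [hT, hC]
          rw [Finset.sum_sub_distrib, Finset.sum_sub_distrib, Finset.sum_add_distrib]
          ring
  -- the shifted measure has density G w.r.t. μ
  have hshift : gaussPi d (x + δ) σ = μ.withDensity G := by
    have h1 : ∀ i, gaussianReal ((x + δ) i) ((σ i ^ 2).toNNReal) =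
        (gaussianReal (x i) ((σ i ^ 2).toNNReal)).withDensity (g i) := by
      intro i
      have := gaussianReal_shift_aux (x i) (δ i) (σ i) (hσ i)
      rw [Pi.add_apply, this]
      congr 1
      funext t
      rw [hg]
      simp only [hlam i]
    exact pi_withDensity_aux _ _ g hgmeas h1
  have hTmeas : Measurable T :=
    Finset.measurable_sum Finset.univ
      (fun i _ => by fun_prop)
  have hGmeas : Measurable G :=
    Finset.measurable_prod Finset.univ
      (fun i _ => (hgmeas i).comp (measurable_pi_apply i))
  have hAmeas : MeasurableSet A := hh (measurableSet_singleton true)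
  have hSmeas : MeasurableSet S := by
    rw [hS]; exact measurableSet_le measurable_const hTmeas
  haveI : IsProbabilityMeasure μ := by
    rw [hμ]; unfold gaussPi; infer_instance
  set c : ℝ≥0∞ := ENNReal.ofReal (Real.exp (β - C)) with hc
  have hcS : ∀ z ∈ S, c ≤ G z := by
    intro z hz
    rw [hGval z, hc]
    refine ENNReal.ofReal_le_ofReal (Real.exp_le_exp.2 ?_)
    have : β ≤ T z := by rw [hS] at hz; exact hz
    linarith
  have hcSc : ∀ z ∉ S, G z ≤ c := by
    intro z hz
    rw [hGval z, hc]
    refine ENNReal.ofReal_le_ofReal (Real.exp_le_exp.2 ?_)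
    have : ¬ β ≤ T z := by rw [hS] at hz; exact hz
    linarith
  -- splitting lemma
  have hsplit : ∀ (B : Set (Fin d → ℝ)), MeasurableSet B →
      ∫⁻ z in B, G z ∂μ = ∫⁻ z in B ∩ S, G z ∂μ + ∫⁻ z in B \ S, G z ∂μ := by
    intro B hB
    rw [← lintegral_union (hB.diff hSmeas)
      (Set.disjoint_left.mpr fun z hz hz' => hz'.2 hz.2), Set.inter_union_diff]
  -- measure comparison
  have hdiff : μ (A \ S) ≤ μ (S \ A) := by
    have key : μ (A ∩ S) + μ (A \ S) ≤ μ (A ∩ S) + μ (S \ A) := by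
      rw [measure_inter_add_diff A hSmeas]
      calc μ A ≤ μ S := hup
        _ = μ (S ∩ A) + μ (S \ A) := (measure_inter_add_diff S hAmeas).symm
        _ = μ (A ∩ S) + μ (S \ A) := by rw [Set.inter_comm]
    exact (ENNReal.add_le_add_iff_left (measure_ne_top μ _)).mp key
  rw [hshift, withDensity_apply _ hAmeas, withDensity_apply _ hSmeas]
  calc ∫⁻ z in A, G z ∂μ
      = ∫⁻ z in A ∩ S, G z ∂μ + ∫⁻ z in A \ S, G z ∂μ := hsplit A hAmeas
    _ ≤ ∫⁻ z in A ∩ S, G z ∂μ + c * μ (A \ S) := by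
        refine add_le_add_right ?_ _
        calc ∫⁻ z in A \ S, G z ∂μ ≤ ∫⁻ _ in A \ S, c ∂μ :=
              setLIntegral_mono measurable_const fun z hz => hcSc z hz.2
          _ = c * μ (A \ S) := setLIntegral_const _ _
    _ ≤ ∫⁻ z in A ∩ S, G z ∂μ + c * μ (S \ A) :=
        add_le_add_right (mul_le_mul_right hdiff c) _
    _ ≤ ∫⁻ z in A ∩ S, G z ∂μ + ∫⁻ z in S \ A, G z ∂μ := by
        refine add_le_add_right ?_ _
        calc c * μ (S \ A) = ∫⁻ _ in S \ A, c ∂μ := (setLIntegral_const _ _).symm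
          _ ≤ ∫⁻ z in S \ A, G z ∂μ := setLIntegral_mono hGmeas fun z hz => hcS z hz.1
    _ = ∫⁻ z in S ∩ A, G z ∂μ + ∫⁻ z in S \ A, G z ∂μ := by rw [Set.inter_comm]
    _ = ∫⁻ z in S, G z ∂μ := by
        rw [← lintegral_union (hSmeas.diff hAmeas)
          (Set.disjoint_left.mpr fun z hz hz' => hz'.2 hz.2), Set.inter_union_diff]
end
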